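/- In the duplicated discrete setting: let 𝐋ᵈ : Q⁴ → ℝ be a regular discrete Lagrangian on (Q×Q)² satisfying 𝐋ᵈ ∘ ι̃_d = -𝐋ᵈ where ι̃_d(q₀,q₁,Q₀,Q₁) = (Q₀,Q₁,q₀,q₁). Then the discrete Lagrangian flow F_{𝐋ᵈ} maps the duplicated diagonal ε̃_d(Q×Q) = {(q₀,q₁,q₀,q₁)} into itself. -/

import Mathlib

/-- Discrete Euler–Lagrange equations on the duplicated configuration space
`Q × Q` (points `x = (q,Q)`): `D₁𝐋ᵈ(x₁,x₂) + D₂𝐋ᵈ(x₀,x₁) = 0`. -/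
noncomputable def DEL2 (n : ℕ)
    (Ld : ((Fin n → ℝ) × (Fin n → ℝ)) × ((Fin n → ℝ) × (Fin n → ℝ)) → ℝ)
    (x0 x1 x2 : (Fin n → ℝ) × (Fin n → ℝ)) : Prop :=
  fderiv ℝ (fun x => Ld (x, x2)) x1 + fderiv ℝ (fun y => Ld (x0, y)) x1 = 0

noncomputable def Sw (n : ℕ) :
    ((Fin n → ℝ) × (Fin n → ℝ)) →L[ℝ] ((Fin n → ℝ) × (Fin n → ℝ)) :=
  (ContinuousLinearMap.snd ℝ _ _).prod (ContinuousLinearMap.fst ℝ _ _)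

lemma Sw_apply (n : ℕ) (p : (Fin n → ℝ) × (Fin n → ℝ)) : Sw n p = (p.2, p.1) := rfl

lemma key (n : ℕ) (f g : ((Fin n → ℝ) × (Fin n → ℝ)) → ℝ) (hg : Differentiable ℝ g)
    (h : ∀ p, f p = -g (Sw n p)) (x : (Fin n → ℝ) × (Fin n → ℝ)) :
    fderiv ℝ f x = -((fderiv ℝ g (Sw n x)).comp (Sw n)) := by
  have hfe : f = fun p => -(g ∘ (Sw n)) p := funext h
  rw [hfe, fderiv_fun_neg, fderiv_comp x (hg _) (Sw n).differentiableAt, (Sw n).fderiv]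

/-- If the regular duplicated discrete Lagrangian `𝐋ᵈ` satisfies
`𝐋ᵈ ∘ ι̃_d = -𝐋ᵈ` for the swap `ι̃_d(q₀,q₁,Q₀,Q₁) = (Q₀,Q₁,q₀,q₁)`, then the
discrete Lagrangian flow `F` maps the duplicated diagonal
`{(q₀,q₁,q₀,q₁)}` into itself. -/
theorem stmt_12 (n : ℕ)
    (Ld : ((Fin n → ℝ) × (Fin n → ℝ)) × ((Fin n → ℝ) × (Fin n → ℝ)) → ℝ)
    (hLd : Differentiable ℝ Ld)
    (hanti : ∀ x0 x1 : (Fin n → ℝ) × (Fin n → ℝ),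
      Ld ((x0.2, x0.1), (x1.2, x1.1)) = -Ld (x0, x1))
    (F : ((Fin n → ℝ) × (Fin n → ℝ)) × ((Fin n → ℝ) × (Fin n → ℝ)) →
         ((Fin n → ℝ) × (Fin n → ℝ)) × ((Fin n → ℝ) × (Fin n → ℝ)))
    (hF1 : ∀ z, (F z).1 = z.2)
    (hF2 : ∀ z, DEL2 n Ld z.1 z.2 (F z).2)
    (huniq : ∀ x0 x1 x2 x2' : (Fin n → ℝ) × (Fin n → ℝ),
      DEL2 n Ld x0 x1 x2 → DEL2 n Ld x0 x1 x2' → x2 = x2') :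
    ∀ z : ((Fin n → ℝ) × (Fin n → ℝ)) × ((Fin n → ℝ) × (Fin n → ℝ)),
      z.1.1 = z.1.2 → z.2.1 = z.2.2 →
      (F z).1.1 = (F z).1.2 ∧ (F z).2.1 = (F z).2.2 := by
  intro z h0 h1
  refine ⟨by rw [hF1 z, ← h1], ?_⟩
  set x0 := z.1
  set x1 := z.2
  set x2 := (F z).2 with hx2
  have hSx1 : Sw n x1 = x1 := by
    rw [Sw_apply]; exact Prod.ext h1.symm h1
  have hSx0 : Sw n x0 = x0 := by
    rw [Sw_apply]; exact Prod.ext h0.symm h0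
  have hdel : DEL2 n Ld x0 x1 x2 := hF2 z
  -- B = -(B ∘ S)
  have hB : fderiv ℝ (fun y => Ld (x0, y)) x1 =
      -((fderiv ℝ (fun y => Ld (x0, y)) x1).comp (Sw n)) := by
    have := key n (fun y => Ld (x0, y)) (fun y => Ld (x0, y))
      (hLd.comp ((differentiable_const x0).prodMk differentiable_id))
      (fun p => by
        rw [Sw_apply]
        have := hanti x0 p
        rw [show ((x0.2, x0.1) : _ × _) = x0 from Prod.ext h0.symm h0] at this
        linarith) x1
    rwa [hSx1] at this
  -- A' = -(A ∘ S)
  have hA' : fderiv ℝ (fun x => Ld (x, (x2.2, x2.1))) x1 =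
      -((fderiv ℝ (fun x => Ld (x, x2))) x1).comp (Sw n) := by
    have := key n (fun x => Ld (x, (x2.2, x2.1))) (fun x => Ld (x, x2))
      (hLd.comp (differentiable_id.prodMk (differentiable_const x2)))
      (fun p => by
        rw [Sw_apply]
        have := hanti p (x2.2, x2.1)
        simp only at this
        rw [show ((x2.1, x2.2) : _ × _) = x2 from rfl] at this
        linarith) x1
    rwa [hSx1] at this
  have hdel' : DEL2 n Ld x0 x1 (x2.2, x2.1) := by
    unfold DEL2 at hdel ⊢
    have hA : fderiv ℝ (fun x => Ld (x, x2)) x1 = -fderiv ℝ (fun y => Ld (x0, y)) x1 :=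
      eq_neg_of_add_eq_zero_left hdel
    have hBS : (fderiv ℝ (fun y => Ld (x0, y)) x1).comp (Sw n) =
        -(fderiv ℝ (fun y => Ld (x0, y)) x1) := by conv_rhs => rw [hB, neg_neg]
    rw [hA', hA, ContinuousLinearMap.neg_comp, neg_neg, hBS]
    exact neg_add_cancel _
  have := huniq x0 x1 x2 (x2.2, x2.1) hdel hdel'
  exact congrArg Prod.fst this
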